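/- Let X and Y be 1-geodesic metric spaces with W ⊆ X. Suppose C ⊆ X is an (r,A)-coarse complementary component of W and f : X → Y is an (η,φ,B)-coarse isometry. Then for each s ≥ 1 there exists A' ≥ 0 (depending only on A, η, φ, B and s) such that N_B(f(C)) is an (s,A')-coarse complementary component of f(W). -/

import Mathlib

open Metric Set
open scoped NNReal

/-- The closed `r`-neighbourhood `N_r(A)` of a subset `A` of a metric space. -/
def nbhd {X : Type*} [PseudoMetricSpace X] (r : ℝ≥0) (A : Set X) : Set X :=
  {x : X | ∃ a ∈ A, nndist x a ≤ r}

/-- The coarse `r`-boundary `∂_r C := {x ∈ X \ C : d(x,C) ≤ r}`. -/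
def coarseBoundary {X : Type*} [PseudoMetricSpace X] (r : ℝ≥0) (C : Set X) : Set X :=
  {x : X | x ∉ C ∧ ∃ c ∈ C, nndist x c ≤ r}

/-- `C` is an `(r,A)`-coarse complementary component of `W`:
`∂_r (C \ N_A(W)) ⊆ N_A(W)`. -/
def IsCCC {X : Type*} [PseudoMetricSpace X] (r A : ℝ≥0) (W C : Set X) : Prop :=
  coarseBoundary r (C \ nbhd A W) ⊆ nbhd A W

/-- `C` is a coarse complementary component of `W`, i.e. an `(r,A)`-coarse complementary
component for some `r ≥ 1`, `A ≥ 0`. -/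
def IsCoarseCompComplement {X : Type*} [PseudoMetricSpace X] (W C : Set X) : Prop :=
  ∃ r A : ℝ≥0, 1 ≤ r ∧ IsCCC r A W C

/-- A coarse complementary component is shallow if contained in some neighbourhood of `W`. -/
def IsShallow {X : Type*} [PseudoMetricSpace X] (W C : Set X) : Prop :=
  ∃ R : ℝ≥0, C ⊆ nbhd R W

/-- A metric space is 1-geodesic if any two points are joined by a discrete geodesic. -/
def OneGeodesic (X : Type*) [PseudoMetricSpace X] : Prop :=
  ∀ x y : X, ∃ (n : ℕ) (c : ℕ → X), c 0 = x ∧ c n = y ∧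
    ∀ i ≤ n, ∀ j ≤ n, dist (c i) (c j) = |(i : ℝ) - (j : ℝ)|

/-- `W` coarsely `n`-separates `X`: there are `n` deep, pairwise coarse disjoint,
coarse complementary components of `W`. -/
def CoarselySeparates {X : Type*} [PseudoMetricSpace X] (n : ℕ) (W : Set X) : Prop :=
  ∃ C : Fin n → Set X,
    (∀ i, IsCoarseCompComplement W (C i)) ∧
    (∀ i, ¬ IsShallow W (C i)) ∧
    ∀ i j : Fin n, i ≠ j → IsShallow W (C i ∩ C j)

/-- A proper nondecreasing function `ℝ≥0 → ℝ≥0`: nondecreasing and tending to infinity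
(equivalently, preimages of compact sets are compact). -/
def ProperND (η : ℝ≥0 → ℝ≥0) : Prop :=
  Monotone η ∧ Filter.Tendsto η Filter.atTop Filter.atTop

/-- `f : X → Y` is an `(η,φ)`-coarse embedding:
`η(d(x,y)) ≤ d(f x, f y) ≤ φ(d(x,y))` for all `x, y`. -/
def IsCoarseEmbeddingWith {X Y : Type*} [PseudoMetricSpace X] [PseudoMetricSpace Y]
    (η φ : ℝ≥0 → ℝ≥0) (f : X → Y) : Prop :=
  ∀ x y : X, η (nndist x y) ≤ nndist (f x) (f y) ∧ nndist (f x) (f y) ≤ φ (nndist x y)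

/-- `f` is a coarse embedding: an `(η,φ)`-coarse embedding for some proper
nondecreasing `η, φ`. -/
def IsCoarseEmbedding {X Y : Type*} [PseudoMetricSpace X] [PseudoMetricSpace Y]
    (f : X → Y) : Prop :=
  ∃ η φ : ℝ≥0 → ℝ≥0, ProperND η ∧ ProperND φ ∧ IsCoarseEmbeddingWith η φ f

/-- `f` is `B`-dense: `N_B(f(X)) = Y`. -/
def IsCoarselyDense {X Y : Type*} [PseudoMetricSpace Y] (B : ℝ≥0) (f : X → Y) : Prop :=
  ∀ y : Y, ∃ x : X, nndist (f x) y ≤ B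

/-- A coarse isometry is a coarsely surjective coarse embedding. -/
def IsCoarseIsometry {X Y : Type*} [PseudoMetricSpace X] [PseudoMetricSpace Y]
    (f : X → Y) : Prop :=
  IsCoarseEmbedding f ∧ ∃ B : ℝ≥0, IsCoarselyDense B f

/-- A geodesic metric space: any two points are joined by an isometrically embedded
segment. -/
def IsGeodesicSpace (X : Type*) [PseudoMetricSpace X] : Prop :=
  ∀ x y : X, ∃ γ : ℝ → X, γ 0 = x ∧ γ (dist x y) = y ∧
    ∀ s ∈ Set.Icc (0 : ℝ) (dist x y), ∀ t ∈ Set.Icc (0 : ℝ) (dist x y),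
      dist (γ s) (γ t) = |s - t|

universe u v

/-- Let `X` and `Y` be 1-geodesic metric spaces with `W ⊆ X`. If
`C ⊆ X` is an `(r,A)`-coarse complementary component of `W` and `f : X → Y` is an
`(η,φ,B)`-coarse isometry, then for each `s ≥ 1` there exists `A' ≥ 0`, depending only
on `A, η, φ, B` and `s`, such that `N_B(f(C))` is an `(s,A')`-coarse complementary
component of `f(W)`. -/
theorem image_isCCC_of_coarseIsometry (A : ℝ≥0) (η φ : ℝ≥0 → ℝ≥0) (B : ℝ≥0)
    (hη : ProperND η) (hφ : ProperND φ) (s : ℝ≥0) (hs : 1 ≤ s) :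
    ∃ A' : ℝ≥0, ∀ (X : Type u) (Y : Type v) [MetricSpace X] [MetricSpace Y],
      OneGeodesic X → OneGeodesic Y →
      ∀ (W C : Set X) (r : ℝ≥0), 1 ≤ r → IsCCC r A W C →
      ∀ f : X → Y, IsCoarseEmbeddingWith η φ f → IsCoarselyDense B f →
        IsCCC s A' (f '' W) (nbhd B (f '' C)) := by
  classical
  obtain ⟨M, hM⟩ := Filter.eventually_atTop.mp (hη.2.eventually_ge_atTop (2 * B + s + 1))
  refine ⟨B + φ (M + A), ?_⟩
  intro X Y _ _ hX _ W C r hr hCCC f hf hdense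
  rintro y ⟨hyD, d, hdD, hyd⟩
  by_contra hyN
  have hyD' : y ∉ nbhd B (f '' C) := fun h => hyD ⟨h, hyN⟩
  obtain ⟨fc, ⟨c, hcC, rfl⟩, hdfc⟩ := hdD.1
  obtain ⟨x, hx⟩ := hdense y
  have hfxfc : nndist (f x) (f c) ≤ 2 * B + s := by
    calc nndist (f x) (f c) ≤ nndist (f x) d + nndist d (f c) := nndist_triangle _ _ _
      _ ≤ nndist (f x) y + nndist y d + nndist d (f c) :=
          add_le_add_left (nndist_triangle _ _ _) _
      _ ≤ B + s + B := add_le_add (add_le_add hx hyd) hdfc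
      _ = 2 * B + s := by ring
  have hxc : nndist x c < M := by
    by_contra h
    push_neg at h
    have h1 := hM (nndist x c) h
    have h2 := (hf x c).1
    have h3 : (2 * B + s + 1 : ℝ≥0) ≤ 2 * B + s := le_trans (le_trans h1 h2) hfxfc
    simp at h3
  have hxC : x ∉ C := by
    intro hxC
    exact hyD' ⟨f x, ⟨x, hxC, rfl⟩, by rwa [nndist_comm]⟩
  have hcN : c ∉ nbhd A W := by
    rintro ⟨w, hw, hcw⟩
    refine hdD.2 ⟨f w, ⟨w, hw, rfl⟩, ?_⟩
    calc nndist d (f w) ≤ nndist d (f c) + nndist (f c) (f w) := nndist_triangle _ _ _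
      _ ≤ B + φ A := add_le_add hdfc (le_trans (hf c w).2 (hφ.1 hcw))
      _ ≤ B + φ (M + A) := add_le_add_right (hφ.1 le_add_self) _
  obtain ⟨n, ch, hch0, hchn, hchd⟩ := hX c x
  have hn0 : ch 0 ∈ C \ nbhd A W := by rw [hch0]; exact ⟨hcC, hcN⟩
  have hnn : ch n ∉ C \ nbhd A W := by rw [hchn]; exact fun h => hxC h.1
  have hex : ∃ k, ch k ∉ C \ nbhd A W := ⟨n, hnn⟩
  set k := Nat.find hex with hk
  have hkspec : ch k ∉ C \ nbhd A W := Nat.find_spec hex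
  have hkpos : 0 < k := by
    by_contra h
    push_neg at h
    have h0 : k = 0 := Nat.le_zero.mp h
    rw [h0] at hkspec
    exact hkspec hn0
  have hkn : k ≤ n := Nat.find_min' hex hnn
  have hk1 : ch (k - 1) ∈ C \ nbhd A W := by
    by_contra h
    exact Nat.find_min hex (Nat.sub_lt hkpos Nat.one_pos) h
  have hcast : ((k - 1 : ℕ) : ℝ) = (k : ℝ) - 1 := by
    rw [Nat.cast_sub hkpos]; simp
  have hd1 : dist (ch k) (ch (k - 1)) = 1 := by
    rw [hchd k hkn (k - 1) (le_trans (Nat.sub_le k 1) hkn), hcast,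
      show (k : ℝ) - ((k : ℝ) - 1) = 1 by ring, abs_one]
  have hbd : ch k ∈ coarseBoundary r (C \ nbhd A W) := by
    refine ⟨hkspec, ch (k - 1), hk1, ?_⟩
    rw [← NNReal.coe_le_coe, coe_nndist, hd1]
    exact_mod_cast hr
  obtain ⟨w, hwW, hchkw⟩ := hCCC hbd
  have hnM : (n : ℝ) < (M : ℝ) := by
    have h0 := hchd 0 (Nat.zero_le n) n le_rfl
    rw [hch0, hchn] at h0
    have h2 : dist c x = (n : ℝ) := by
      rw [h0]; simp
    calc (n : ℝ) = dist c x := h2.symm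
      _ = (nndist x c : ℝ) := by rw [coe_nndist, dist_comm]
      _ < (M : ℝ) := NNReal.coe_lt_coe.mpr hxc
  have hxk : dist x (ch k) ≤ (M : ℝ) := by
    have h0 := hchd n le_rfl k hkn
    rw [hchn] at h0
    rw [h0, abs_of_nonneg (sub_nonneg.mpr (by exact_mod_cast hkn))]
    have hk0 : (0 : ℝ) ≤ (k : ℝ) := Nat.cast_nonneg k
    linarith
  have hxw : nndist x w ≤ M + A := by
    rw [← NNReal.coe_le_coe, coe_nndist, NNReal.coe_add]
    calc dist x w ≤ dist x (ch k) + dist (ch k) w := dist_triangle _ _ _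
      _ ≤ (M : ℝ) + (A : ℝ) := by
          refine add_le_add hxk ?_
          rw [← coe_nndist]
          exact_mod_cast hchkw
  refine hyN ⟨f w, ⟨w, hwW, rfl⟩, ?_⟩
  calc nndist y (f w) ≤ nndist y (f x) + nndist (f x) (f w) := nndist_triangle _ _ _
    _ ≤ B + φ (M + A) :=
        add_le_add (by rwa [nndist_comm]) (le_trans (hf x w).2 (hφ.1 hxw))
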